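/- (Distance of the first level of the hypergraph product: d̃_{−1} = d_0·d_0ᵀ.) Let δ ∈ M_{n1 × n0}(F2). Suppose ker(δ) contains a nonzero vector and ker(δᵀ) contains a nonzero vector, and let d0 := min{|c| : c ∈ ker(δ), c ≠ 0} and d0ᵀ := min{|c| : c ∈ ker(δᵀ), c ≠ 0}. Then min{|R| : R ∈ M_{n0 × n1}(F2), R ≠ 0, δ·R = 0 and R·δ = 0} = d0 · d0ᵀ. (The matrices R with δR = 0 and Rδ = 0 are exactly the reshaped elements of the kernel of the hypergraph-product boundary map δ̃_{−1} = [1⊗δᵀ ; δ⊗1], and |R| is the Hamming weight of the corresponding vector.) -/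

import Mathlib

open Matrix
open scoped Kronecker

abbrev F2 := ZMod 2

/-- Hamming weight of a vector over `F2`. -/
def vwt {ι : Type*} [Fintype ι] (v : ι → F2) : ℕ :=
  (Finset.univ.filter fun i => v i ≠ 0).card

/-- Hamming weight of a matrix over `F2` (number of nonzero entries). -/
def mwt {ι κ : Type*} [Fintype ι] [Fintype κ] (M : Matrix ι κ F2) : ℕ :=
  (Finset.univ.filter fun p : ι × κ => M p.1 p.2 ≠ 0).card

/-- Nullity of a matrix over `F2`: dimension of the kernel of the induced linear map. -/
noncomputable def nullity {ι κ : Type*} [Fintype ι] [Fintype κ] (M : Matrix ι κ F2) : ℕ :=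
  Module.finrank F2 (LinearMap.ker M.mulVecLin)

lemma mwt_eq_sum {ι κ : Type*} [Fintype ι] [Fintype κ] (M : Matrix ι κ F2) :
    mwt M = ∑ i, vwt (M i) := by
  simp [mwt, vwt, Finset.card_filter, Fintype.sum_prod_type]

/-- distance of the first level of the hypergraph product:
`d̃₋₁ = d₀ · d₀ᵀ`, in reshaped matrix form. -/
theorem hypergraph_product_first_distance
    (n0 n1 d0 d0T : ℕ) (δ : Matrix (Fin n1) (Fin n0) F2)
    (hd0mem : ∃ c : Fin n0 → F2, c ≠ 0 ∧ δ.mulVec c = 0 ∧ vwt c = d0)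
    (hd0min : ∀ c : Fin n0 → F2, c ≠ 0 → δ.mulVec c = 0 → d0 ≤ vwt c)
    (hd0Tmem : ∃ c : Fin n1 → F2, c ≠ 0 ∧ δᵀ.mulVec c = 0 ∧ vwt c = d0T)
    (hd0Tmin : ∀ c : Fin n1 → F2, c ≠ 0 → δᵀ.mulVec c = 0 → d0T ≤ vwt c) :
    (∃ R : Matrix (Fin n0) (Fin n1) F2,
      R ≠ 0 ∧ δ * R = 0 ∧ R * δ = 0 ∧ mwt R = d0 * d0T) ∧
    (∀ R : Matrix (Fin n0) (Fin n1) F2,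
      R ≠ 0 → δ * R = 0 → R * δ = 0 → d0 * d0T ≤ mwt R) := by
  classical
  obtain ⟨c, hc0, hcker, hcwt⟩ := hd0mem
  obtain ⟨c', hc'0, hc'ker, hc'wt⟩ := hd0Tmem
  constructor
  · refine ⟨Matrix.of fun i j => c i * c' j, ?_, ?_, ?_, ?_⟩
    · obtain ⟨i, hi⟩ := Function.ne_iff.mp hc0
      obtain ⟨j, hj⟩ := Function.ne_iff.mp hc'0
      intro h
      have : c i * c' j = 0 := congrFun (congrFun h i) j
      exact (mul_ne_zero hi hj) this
    · ext k j
      have := congrFun hcker k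
      simp only [mulVec, dotProduct, Pi.zero_apply] at this
      simp only [mul_apply, of_apply, Matrix.zero_apply]
      calc ∑ i, δ k i * (c i * c' j) = (∑ i, δ k i * c i) * c' j := by
            rw [Finset.sum_mul]; congr 1; ext i; ring
        _ = 0 := by rw [this, zero_mul]
    · ext i k
      have := congrFun hc'ker k
      simp only [mulVec, dotProduct, transpose_apply, Pi.zero_apply] at this
      simp only [mul_apply, of_apply, Matrix.zero_apply]
      calc ∑ j, c i * c' j * δ j k = c i * (∑ j, δ j k * c' j) := by
            rw [Finset.mul_sum]; apply Finset.sum_congr rfl; intro j _; ring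
        _ = 0 := by rw [this, mul_zero]
    · rw [mwt_eq_sum, ← hcwt, ← hc'wt, vwt, Finset.card_filter, Finset.sum_mul]
      apply Finset.sum_congr rfl
      intro i _
      by_cases hi : c i = 0
      · simp [vwt, of_apply, hi]
      · simp only [hi, ne_eq, not_false_iff, if_true, one_mul]
        unfold vwt
        congr 1
        apply Finset.filter_congr
        intro j _
        simp [of_apply, mul_eq_zero, hi]
  · intro R hR0 hRl hRr
    -- columns of R in ker δ, rows in ker δᵀ
    have hcol : ∀ j, δ.mulVec (fun i => R i j) = 0 := by
      intro j; ext k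
      have := congrFun (congrFun hRl k) j
      simpa [mul_apply, mulVec, dotProduct] using this
    have hrow : ∀ i, δᵀ.mulVec (R i) = 0 := by
      intro i; ext k
      have := congrFun (congrFun hRr i) k
      simp only [mul_apply, Matrix.zero_apply] at this
      simp only [mulVec, dotProduct, transpose_apply, Pi.zero_apply]
      rw [← this]
      apply Finset.sum_congr rfl
      intro j _; ring
    obtain ⟨i0, j0, hij⟩ : ∃ i j, R i j ≠ 0 := by
      by_contra h
      push_neg at h
      exact hR0 (by ext i j; exact h i j)
    -- the column j0 is nonzero, so its weight ≥ d0
    have hcolwt : d0 ≤ vwt (fun i => R i j0) := by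
      apply hd0min _ _ (hcol j0)
      intro h
      exact hij (congrFun h i0)
    -- each row meeting column j0 is nonzero so weight ≥ d0T
    rw [mwt_eq_sum]
    set S : Finset (Fin n0) := Finset.univ.filter fun i => R i j0 ≠ 0 with hS
    have hScard : d0 ≤ S.card := hcolwt
    calc d0 * d0T ≤ S.card * d0T := Nat.mul_le_mul_right _ hScard
      _ = ∑ _i ∈ S, d0T := by rw [Finset.sum_const, smul_eq_mul]
      _ ≤ ∑ i ∈ S, vwt (R i) := by
          apply Finset.sum_le_sum
          intro i hi
          have hi' : R i j0 ≠ 0 := (Finset.mem_filter.mp hi).2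
          exact hd0Tmin _ (fun h => hi' (congrFun h j0)) (hrow i)
      _ ≤ ∑ i, vwt (R i) := Finset.sum_le_sum_of_subset (Finset.filter_subset _ _)
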